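/- arXiv:2512.04610 — 2 statements merged into one kernel-verified Lean document; each statement's English description precedes it below -/
import Mathlib

section
/- Let G be a graph and ℱ = {F₁,…,F_k} a set of k flips. Then there exists a set of flips ℱ' with |ℱ'| ≤ C(2^{2k}+1, 2) (binomial coefficient) such that G ⊕ ℱ = G ⊕ ℱ' and no pair of vertices has its adjacency flipped by more than one flip in ℱ'. -/
/-- The flip of a graph `G` on a pair of vertex sets `(A, B)`: the adjacency between
every pair of distinct vertices `u ∈ A`, `v ∈ B` is complemented. -/
def gflip {V : Type*} (G : SimpleGraph V) (A B : Set V) : SimpleGraph V where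
  Adj u v := u ≠ v ∧ Xor' (G.Adj u v) ((u ∈ A ∧ v ∈ B) ∨ (u ∈ B ∧ v ∈ A))
  symm := ⟨by
    intro u v hx
    obtain ⟨h, hx⟩ := hx
    refine ⟨h.symm, ?_⟩
    have hGA : G.Adj v u ↔ G.Adj u v := ⟨fun h => h.symm, fun h => h.symm⟩
    unfold Xor' at *
    unfold Xor at *
    tauto⟩
  loopless := ⟨by intro v hx; exact hx.1 rfl⟩

/-- Applying a list of flips `L` to `G`, in order. -/
def gflipAll {V : Type*} (G : SimpleGraph V) (L : List (Set V × Set V)) : SimpleGraph V :=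
  L.foldl (fun H F => gflip H F.1 F.2) G

/-- The pair of (distinct) vertices `u, v` has its adjacency flipped by the flip `F`. -/
def FlipsPair {V : Type*} (F : Set V × Set V) (u v : V) : Prop :=
  (u ∈ F.1 ∧ v ∈ F.2) ∨ (u ∈ F.2 ∧ v ∈ F.1)

open Classical

/-- The number of flips in the list `L` which flip the pair `u, v`. -/
noncomputable def flipCount {V : Type*} (L : List (Set V × Set V)) (u v : V) : ℕ :=
  L.countP (fun F => decide (FlipsPair F u v))

lemma gflipAll_adj {V : Type*} (G : SimpleGraph V) (L : List (Set V × Set V)) (u v : V) :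
    (gflipAll G L).Adj u v ↔ u ≠ v ∧ Xor' (G.Adj u v) (Odd (flipCount L u v)) := by
  induction L generalizing G with
  | nil =>
    have h0 : flipCount ([] : List (Set V × Set V)) u v = 0 := rfl
    have hGG : (gflipAll G []).Adj u v ↔ G.Adj u v := Iff.rfl
    rw [hGG, h0]
    simp only [Nat.odd_iff]
    constructor
    · intro h; exact ⟨G.ne_of_adj h, Or.inl ⟨h, by norm_num⟩⟩
    · rintro ⟨-, h⟩
      unfold Xor' at h
      rcases h with ⟨h, -⟩ | ⟨h, -⟩
      · exact h
      · norm_num at h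
  | cons F L ih =>
    have key : (gflip G F.1 F.2).Adj u v ↔ u ≠ v ∧ Xor' (G.Adj u v) (FlipsPair F u v) :=
      Iff.rfl
    show (gflipAll (gflip G F.1 F.2) L).Adj u v ↔ _
    rw [ih, key]
    by_cases hF : FlipsPair F u v
    · have hc : flipCount (F :: L) u v = flipCount L u v + 1 := by
        simp [flipCount, List.countP_cons, hF]
      rw [hc, Nat.odd_add_one]
      unfold Xor'; unfold Xor; tauto
    · have hc : flipCount (F :: L) u v = flipCount L u v := by
        simp [flipCount, List.countP_cons, hF]
      rw [hc]
      unfold Xor'; unfold Xor; tauto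

/-- The signature of a vertex with respect to a list of flips: which sides of the flips
the vertex belongs to. -/
noncomputable def gsig {V : Type*} (L : List (Set V × Set V)) (v : V) :
    Fin L.length → Bool × Bool :=
  fun i => (decide (v ∈ (L.get i).1), decide (v ∈ (L.get i).2))

/-- Parity of the number of flips flipping a pair of vertices with signatures `a`, `b`. -/
def sigPar {n : ℕ} (a b : Fin n → Bool × Bool) : Prop :=
  Odd ((List.finRange n).countP fun i => ((a i).1 && (b i).2) || ((a i).2 && (b i).1))

lemma sigPar_comm {n : ℕ} (a b : Fin n → Bool × Bool) : sigPar a b ↔ sigPar b a := by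
  unfold sigPar
  have h : (fun i => ((a i).1 && (b i).2) || ((a i).2 && (b i).1))
      = (fun i => ((b i).1 && (a i).2) || ((b i).2 && (a i).1)) := by
    funext i
    rw [Bool.or_comm, Bool.and_comm ((a i).1), Bool.and_comm ((a i).2)]
  rw [h]

lemma odd_flipCount_iff {V : Type*} (L : List (Set V × Set V)) (u v : V) :
    Odd (flipCount L u v) ↔ sigPar (gsig L u) (gsig L v) := by
  have h1 : flipCount L u v
      = (List.finRange L.length).countP (fun i => decide (FlipsPair (L.get i) u v)) := by
    conv_lhs => rw [flipCount, ← List.ofFn_get L]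
    rw [List.ofFn_eq_map, List.countP_map]
    rfl
  have h2 : (fun i => decide (FlipsPair (L.get i) u v))
      = (fun i => ((gsig L u i).1 && (gsig L v i).2) || ((gsig L u i).2 && (gsig L v i).1)) := by
    funext i
    simp only [FlipsPair, gsig]
    by_cases ha : u ∈ (L.get i).1 <;> by_cases hb : v ∈ (L.get i).2 <;>
      by_cases hc : u ∈ (L.get i).2 <;> by_cases hd : v ∈ (L.get i).1 <;>
      simp only [List.get_eq_getElem] at ha hb hc hd <;> simp [ha, hb, hc, hd]
  rw [sigPar, h1, h2]

lemma Finset.countP_toList' {α : Type*} (s : Finset α) (p : α → Bool) :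
    s.toList.countP p = (s.filter (fun x => p x = true)).card := by
  classical
  rw [List.countP_eq_length_filter]
  have h1 : ((s.filter (fun x => p x = true)).val : Multiset α)
      = Multiset.filter (fun x => p x = true) s.val := Finset.filter_val _ _
  have h2 : (s.val : Multiset α) = (↑s.toList : Multiset α) := (Finset.coe_toList s).symm
  rw [Finset.card_def, h1, h2, Multiset.filter_coe, Multiset.coe_card]
  congr 1
  apply List.filter_congr
  intro x _
  simp

/-- Any set of `k` flips is equivalent to a set of at most `C(2^(2k)+1, 2)` flips
such that no pair of vertices has its adjacency flipped more than once. -/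
theorem exists_nonoverlapping_flips {V : Type*} (G : SimpleGraph V)
    (L : List (Set V × Set V)) :
    ∃ L' : List (Set V × Set V),
      L'.length ≤ (2 ^ (2 * L.length) + 1).choose 2 ∧
      gflipAll G L = gflipAll G L' ∧
      L'.Pairwise (fun F₁ F₂ => ∀ u v : V, u ≠ v →
        ¬(FlipsPair F₁ u v ∧ FlipsPair F₂ u v)) := by
  classical
  set n := L.length with hn
  set N := Fintype.card (Fin n → Bool × Bool) with hN
  let e : (Fin n → Bool × Bool) ≃ Fin N := Fintype.equivFin _
  have hNval : N = 2 ^ (2 * n) := by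
    rw [hN, Fintype.card_fun, Fintype.card_fin, Fintype.card_prod, Fintype.card_bool]
    rw [show (2 * 2 : ℕ) = 2 ^ 2 from rfl, ← pow_mul]
  let σ : V → Fin N := fun v => e (gsig L v)
  let C : Fin N → Set V := fun i => {v | σ v = i}
  let par : Fin N → Fin N → Prop := fun i j => sigPar (e.symm i) (e.symm j)
  let pairs : Finset (Fin N × Fin N) :=
    Finset.univ.filter (fun p => p.1 ≤ p.2 ∧ par p.1 p.2)
  let f : Fin N × Fin N → Set V × Set V := fun p => (C p.1, C p.2)
  have hmem : ∀ p ∈ pairs, p.1 ≤ p.2 ∧ par p.1 p.2 := by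
    intro p hp
    exact (Finset.mem_filter.mp hp).2
  have hflip : ∀ (p : Fin N × Fin N) (u v : V),
      FlipsPair (f p) u v ↔ ((σ u = p.1 ∧ σ v = p.2) ∨ (σ u = p.2 ∧ σ v = p.1)) :=
    fun p u v => Iff.rfl
  refine ⟨pairs.toList.map f, ?_, ?_, ?_⟩
  · -- length bound
    have h1 : pairs ⊆ Finset.univ.filter (fun p : Fin N × Fin N => p.1 ≤ p.2) := by
      intro p hp
      simp only [Finset.mem_filter, Finset.mem_univ, true_and]
      exact (hmem p hp).1
    have h2 : (Finset.univ.filter (fun p : Fin N × Fin N => p.1 ≤ p.2)).card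
        = (N + 1).choose 2 := by
      rw [← Fintype.card_subtype]
      have h3 : Fintype.card {p : Fin N × Fin N // p.1 ≤ p.2}
          = Fintype.card (Sym2 (Fin N)) := (Fintype.card_congr Sym2.sortEquiv).symm
      rw [h3, Sym2.card, Fintype.card_fin]
    rw [List.length_map, Finset.length_toList]
    have h4 := Finset.card_le_card h1
    rw [h2] at h4
    exact le_trans h4 (le_of_eq (congrArg (fun m => (m + 1).choose 2) hNval))
  · -- same graph
    ext u v
    rw [gflipAll_adj, gflipAll_adj]
    by_cases huv : u = v
    · subst huv; simp
    have hkey : Odd (flipCount L u v) ↔ Odd (flipCount (pairs.toList.map f) u v) := by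
      have hcount : flipCount (pairs.toList.map f) u v
          = (pairs.filter (fun p => FlipsPair (f p) u v)).card := by
        rw [flipCount, List.countP_map, Finset.countP_toList']
        congr 1
        apply Finset.filter_congr
        intro p _
        simp [Function.comp]
      have hpar_ab : par (σ u) (σ v) ↔ Odd (flipCount L u v) := by
        have h1 : e.symm (σ u) = gsig L u := Equiv.symm_apply_apply e _
        have h2 : e.symm (σ v) = gsig L v := Equiv.symm_apply_apply e _
        rw [show par (σ u) (σ v) = sigPar (e.symm (σ u)) (e.symm (σ v)) from rfl, h1, h2,
          odd_flipCount_iff]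
      have hpar_infsup : par (σ u ⊓ σ v) (σ u ⊔ σ v) ↔ par (σ u) (σ v) := by
        rcases le_total (σ u) (σ v) with hab | hab
        · rw [inf_eq_left.mpr hab, sup_eq_right.mpr hab]
        · rw [inf_eq_right.mpr hab, sup_eq_left.mpr hab]
          exact sigPar_comm _ _
      have hfilter : pairs.filter (fun p => FlipsPair (f p) u v)
          = if par (σ u ⊓ σ v) (σ u ⊔ σ v) then {(σ u ⊓ σ v, σ u ⊔ σ v)} else ∅ := by
        ext p
        simp only [Finset.mem_filter]
        constructor
        · rintro ⟨hp, hfp⟩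
          obtain ⟨hle, hpp⟩ := hmem p hp
          rw [hflip] at hfp
          rcases hfp with ⟨h1, h2⟩ | ⟨h1, h2⟩
          · have hab : σ u ≤ σ v := by rw [h1, h2]; exact hle
            have hi : σ u ⊓ σ v = σ u := inf_eq_left.mpr hab
            have hs : σ u ⊔ σ v = σ v := sup_eq_right.mpr hab
            have hcond : par (σ u ⊓ σ v) (σ u ⊔ σ v) := by
              rw [hi, hs, h1, h2]; exact hpp
            rw [if_pos hcond, Finset.mem_singleton]
            refine Prod.ext ?_ ?_
            · rw [hi]; exact h1.symm
            · rw [hs]; exact h2.symm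
          · have hle' := hle
            rw [← h2, ← h1] at hle'
            have hi : σ u ⊓ σ v = σ v := inf_eq_right.mpr hle'
            have hs : σ u ⊔ σ v = σ u := sup_eq_left.mpr hle'
            have hcond : par (σ u ⊓ σ v) (σ u ⊔ σ v) := by
              rw [hi, hs, h2, h1]; exact hpp
            rw [if_pos hcond, Finset.mem_singleton]
            refine Prod.ext ?_ ?_
            · rw [hi]; exact h2.symm
            · rw [hs]; exact h1.symm
        · intro hp
          by_cases hc : par (σ u ⊓ σ v) (σ u ⊔ σ v)
          · rw [if_pos hc, Finset.mem_singleton] at hp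
            subst hp
            refine ⟨?_, ?_⟩
            · exact Finset.mem_filter.mpr ⟨Finset.mem_univ _, inf_le_sup, hc⟩
            · rw [hflip]
              rcases le_total (σ u) (σ v) with hab | hab
              · exact Or.inl ⟨(inf_eq_left.mpr hab).symm, (sup_eq_right.mpr hab).symm⟩
              · exact Or.inr ⟨(sup_eq_left.mpr hab).symm, (inf_eq_right.mpr hab).symm⟩
          · rw [if_neg hc] at hp
            simp at hp
      rw [hcount, hfilter]
      by_cases hc : par (σ u ⊓ σ v) (σ u ⊔ σ v)
      · rw [if_pos hc]
        simp only [Finset.card_singleton]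
        constructor
        · intro _; exact odd_one
        · intro _; rw [← hpar_ab, ← hpar_infsup]; exact hc
      · rw [if_neg hc]
        simp only [Finset.card_empty]
        constructor
        · intro h; exact absurd (hpar_infsup.mpr (hpar_ab.mpr h)) hc
        · intro h; exact absurd h (by simp [Nat.odd_iff])
    unfold Xor'
    unfold Xor
    tauto
  · -- pairwise
    rw [List.pairwise_map]
    have hnd : pairs.toList.Pairwise (· ≠ ·) := pairs.nodup_toList
    refine List.Pairwise.imp_of_mem ?_ hnd
    intro p q hp hq hpq u v _ h12
    obtain ⟨h1, h2⟩ := h12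
    rw [Finset.mem_toList] at hp hq
    obtain ⟨hple, -⟩ := hmem p hp
    obtain ⟨hqle, -⟩ := hmem q hq
    rw [hflip] at h1 h2
    apply hpq
    rcases h1 with ⟨ha1, hb1⟩ | ⟨ha1, hb1⟩ <;> rcases h2 with ⟨ha2, hb2⟩ | ⟨ha2, hb2⟩
    · refine Prod.ext ?_ ?_
      · rw [← ha1]; exact ha2
      · rw [← hb1]; exact hb2
    · -- σu = p.1, σv = p.2, σu = q.2, σv = q.1
      have h3 : p.1 ≤ p.2 := hple
      have h4 : q.1 ≤ q.2 := hqle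
      rw [← ha1, ← hb1] at h3
      rw [← hb2, ← ha2] at h4
      have he : σ u = σ v := le_antisymm h3 h4
      refine Prod.ext ?_ ?_
      · rw [← ha1, he]; exact hb2
      · rw [← hb1, ← he]; exact ha2
    · have h3 : p.1 ≤ p.2 := hple
      have h4 : q.1 ≤ q.2 := hqle
      rw [← hb1, ← ha1] at h3
      rw [← ha2, ← hb2] at h4
      have he : σ u = σ v := le_antisymm h4 h3
      refine Prod.ext ?_ ?_
      · rw [← hb1, ← he]; exact ha2
      · rw [← ha1, he]; exact hb2
    · refine Prod.ext ?_ ?_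
      · rw [← hb1]; exact hb2
      · rw [← ha1]; exact ha2
end

section
/- Let G be a graph and let a₁,…,a_{t₀+1} be distinct vertices in P₁ such that every vertex u ∈ P₂ is adjacent in G to at least t₀ of the vertices a₁,…,a_{t₀+1}. If G contains no K_{t₀,t₀} subgraph with one side among {a₁,…,a_{t₀+1}} and the other side in P₂, then |P₂| ≤ (t₀−1)(t₀+1) + (t₀−1) = t₀² + t₀ − 2. -/
open Finset

/-- The counting argument: if `a₁,…,a_{t₀+1}` are distinct vertices of `P₁` such that
every vertex of `P₂` is adjacent to at least `t₀` of them, and `G` contains no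
`K_{t₀,t₀}` with one side among the `aᵢ` and the other side in `P₂`, then
`|P₂| ≤ (t₀-1)(t₀+1) + (t₀-1) = t₀² + t₀ - 2`. -/
theorem bound_on_P2 {V : Type*} (G : SimpleGraph V) [DecidableRel G.Adj]
    (t₀ : ℕ) (ht₀ : 0 < t₀) (P₁ P₂ : Finset V)
    (a : Fin (t₀ + 1) → V) (ha_inj : Function.Injective a) (haP : ∀ i, a i ∈ P₁)
    (hdeg : ∀ u ∈ P₂, t₀ ≤ (Finset.univ.filter (fun i => G.Adj u (a i))).card)
    (hKtt : ¬ ∃ (I : Finset (Fin (t₀ + 1))) (Y : Finset V),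
      I.card = t₀ ∧ Y ⊆ P₂ ∧ Y.card = t₀ ∧ (∀ i ∈ I, a i ∉ Y) ∧
      ∀ i ∈ I, ∀ y ∈ Y, G.Adj (a i) y) :
    P₂.card ≤ t₀ ^ 2 + t₀ - 2 := by
  classical
  set g : V → Option (Fin (t₀ + 1)) :=
    fun u => if h : ∃ i, ¬ G.Adj u (a i) then some h.choose else none with hg
  -- each vertex of P₂ misses at most one index
  have hmiss : ∀ u ∈ P₂, ∀ i j, ¬ G.Adj u (a i) → ¬ G.Adj u (a j) → i = j := by
    intro u hu i j hi hj
    by_contra hne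
    have h1 := hdeg u hu
    have hsub : ({i, j} : Finset (Fin (t₀+1))) ⊆
        Finset.univ.filter (fun k => ¬ G.Adj u (a k)) := by
      intro k hk
      simp only [mem_insert, mem_singleton] at hk
      rcases hk with rfl | rfl <;> simp [hi, hj]
    have h2 : 2 ≤ (Finset.univ.filter (fun k => ¬ G.Adj u (a k))).card := by
      have := Finset.card_le_card hsub
      rwa [Finset.card_insert_of_notMem (by simpa using hne), Finset.card_singleton] at this
    have h3 := Finset.card_filter_add_card_filter_not
      (s := (Finset.univ : Finset (Fin (t₀+1)))) (p := fun i => G.Adj u (a i))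
    simp only [Finset.card_univ, Fintype.card_fin] at h3
    omega
  -- each fiber of g in P₂ has at most t₀ - 1 elements
  have hfiber : ∀ o, (P₂.filter (fun u => g u = o)).card ≤ t₀ - 1 := by
    intro o
    by_contra hcard
    push_neg at hcard
    have hcard' : t₀ ≤ (P₂.filter (fun u => g u = o)).card := by omega
    obtain ⟨Y, hYsub, hYcard⟩ := Finset.exists_subset_card_eq hcard'
    obtain ⟨I, hIcard, hIadj⟩ : ∃ I : Finset (Fin (t₀+1)), I.card = t₀ ∧
        ∀ u ∈ P₂.filter (fun u => g u = o), ∀ j ∈ I, G.Adj u (a j) := by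
      cases o with
      | none =>
        obtain ⟨I, _, hIc⟩ := Finset.exists_subset_card_eq (s := (univ : Finset (Fin (t₀+1)))) (n := t₀)
          (by simp)
        refine ⟨I, hIc, ?_⟩
        intro u hu j _
        simp only [mem_filter] at hu
        by_contra hadj
        have hex : ∃ i, ¬ G.Adj u (a i) := ⟨j, hadj⟩
        have : g u = some hex.choose := by simp [hg, hex]
        rw [hu.2] at this
        exact absurd this (by simp)
      | some i =>
        refine ⟨univ.erase i, by simp, ?_⟩
        intro u hu j hj
        simp only [mem_filter] at hu
        have hex : ∃ k, ¬ G.Adj u (a k) := by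
          by_contra hne
          push_neg at hne
          have : g u = none := by simp [hg]; exact hne
          rw [hu.2] at this
          exact absurd this (by simp)
        have hgu : g u = some hex.choose := by simp [hg, hex]
        rw [hu.2] at hgu
        have hchoose : hex.choose = i := (Option.some.inj hgu).symm
        by_contra hadj
        have hji := hmiss u hu.1 _ _ hex.choose_spec hadj
        rw [hchoose] at hji
        exact (Finset.mem_erase.mp hj).1 hji.symm
    apply hKtt
    refine ⟨I, Y, hIcard, hYsub.trans (filter_subset _ _), hYcard, ?_, ?_⟩
    · intro i hi hiY
      exact G.irrefl (hIadj _ (hYsub hiY) i hi)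
    · intro i hi y hy
      exact (hIadj y (hYsub hy) i hi).symm
  have hsum := Finset.card_eq_sum_card_fiberwise
    (f := g) (s := P₂) (t := (univ : Finset (Option (Fin (t₀+1)))))
    (fun x _ => mem_univ _)
  rw [hsum]
  calc ∑ o ∈ univ, (P₂.filter (fun u => g u = o)).card
      ≤ ∑ _o ∈ (univ : Finset (Option (Fin (t₀+1)))), (t₀ - 1) :=
        Finset.sum_le_sum (fun o _ => hfiber o)
    _ = (t₀ + 2) * (t₀ - 1) := by
        rw [Finset.sum_const, smul_eq_mul, Finset.card_univ, Fintype.card_option,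
          Fintype.card_fin]
    _ ≤ t₀ ^ 2 + t₀ - 2 := by
        obtain ⟨k, rfl⟩ := Nat.exists_eq_add_of_le ht₀
        have h1 : (1 + k) ^ 2 = 1 + 2 * k + k * k := by ring
        have h2 : (1 + k + 2) * (1 + k - 1) = k * k + 3 * k := by
          have : 1 + k - 1 = k := by omega
          rw [this]; ring
        show (1 + k + 2) * (1 + k - 1) ≤ (1 + k) ^ 2 + (1 + k) - 2
        omega
end
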